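/- With v = v_P + v_D, the vector -v_D is the metric projection of -v onto the recession cone of cl(dom f): -v_D = P_{rec(cl dom f)}(-v). -/

import Mathlib

open scoped InnerProductSpace Pointwise Classical
open Filter Topology

noncomputable section

variable {H : Type*} [NormedAddCommGroup H] [InnerProductSpace ℝ H]

/-- The effective domain of an extended-real-valued function. -/
def fdom {α : Type*} (f : α → EReal) : Set α := {x | f x ≠ ⊤}

/-- The Fenchel conjugate `f*(u) = sup_x (⟪x, u⟫ - f x)`. -/
def fconj (f : H → EReal) : H → EReal :=
  fun u => ⨆ x : H, ((⟪x, u⟫_ℝ : ℝ) : EReal) - f x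

/-- The recession function `(rec f)(y) = sup_{x ∈ dom f} (f (x + y) - f x)`. -/
def recFn (f : H → EReal) : H → EReal :=
  fun y => ⨆ x ∈ fdom f, (f (x + y) - f x)

/-- A proper function: never `-∞` and not identically `+∞`. -/
def ProperFn {α : Type*} (f : α → EReal) : Prop := (∀ x, f x ≠ ⊥) ∧ ∃ x, f x ≠ ⊤

/-- Convexity of an extended-real-valued function, via convexity of its epigraph. -/
def ConvexFn (f : H → EReal) : Prop :=
  Convex ℝ {p : H × ℝ | f p.1 ≤ (p.2 : EReal)}

/-- `v` is the element of minimum norm of `S`, i.e. `v = P_S 0`, the metric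
projection of `0` onto `S`. -/
def IsMinNormPoint (S : Set H) (v : H) : Prop := v ∈ S ∧ ∀ w ∈ S, ‖v‖ ≤ ‖w‖

/-- `p` is the metric projection of `x` onto `S`, i.e. `p = P_S x`. -/
def IsProjOn (S : Set H) (x p : H) : Prop := p ∈ S ∧ ∀ w ∈ S, dist x p ≤ dist x w

/-- The polar cone `S° = {u | ∀ x ∈ S, ⟪x, u⟫ ≤ 0}`. -/
def polarCone (s : Set H) : Set H := {u | ∀ x ∈ s, ⟪x, u⟫_ℝ ≤ 0}

/-- The recession cone `rec S = {x | ∀ y ∈ S, x + y ∈ S}`. -/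
def recCone (s : Set H) : Set H := {x | ∀ y ∈ s, x + y ∈ s}

/-- `p = prox_f w`: `p` minimizes `y ↦ f y + ½‖y - w‖²`. -/
def IsProxOf (f : H → EReal) (w p : H) : Prop :=
  ∀ y : H, f p + ((1 / 2 * ‖p - w‖ ^ 2 : ℝ) : EReal) ≤ f y + ((1 / 2 * ‖y - w‖ ^ 2 : ℝ) : EReal)

/-! ### Auxiliary lemmas -/

lemma aux_lin {a b c : ℝ} (h : ∀ t : ℝ, 0 ≤ t → c ≤ a + t * b) : 0 ≤ b := by
  by_contra hb
  push_neg at hb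
  rcases le_or_gt (a - c + 1) 0 with h1 | h1
  · have := h 0 le_rfl; linarith
  · have hb0 : (0:ℝ) < -b := by linarith
    have ht : 0 ≤ (a - c + 1) / (-b) := le_of_lt (div_pos h1 hb0)
    have h2 := h _ ht
    have h3 : (a - c + 1) / (-b) * b = -(a - c + 1) := by
      field_simp
      rw [div_self hb.ne]
    rw [h3] at h2
    linarith

lemma fenchel_young (f : H → EReal) (x u : H) :
    ((⟪x, u⟫_ℝ : ℝ) : EReal) - f x ≤ fconj f u :=
  le_iSup (fun x => ((⟪x, u⟫_ℝ : ℝ) : EReal) - f x) x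

lemma fdom_convex {f : H → EReal} (hp : ProperFn f) (hc : ConvexFn f) :
    Convex ℝ (fdom f) := by
  intro x hx y hy a b ha hb hab
  have hfx : f x ≤ ((f x).toReal : EReal) := by
    rw [EReal.coe_toReal hx (hp.1 x)]
  have hfy : f y ≤ ((f y).toReal : EReal) := by
    rw [EReal.coe_toReal hy (hp.1 y)]
  have hmx : ((x, (f x).toReal) : H × ℝ) ∈ {p : H × ℝ | f p.1 ≤ (p.2 : EReal)} := hfx
  have hmy : ((y, (f y).toReal) : H × ℝ) ∈ {p : H × ℝ | f p.1 ≤ (p.2 : EReal)} := hfy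
  have := hc hmx hmy ha hb hab
  simp only [Set.mem_setOf_eq, Prod.smul_mk, Prod.mk_add_mk, smul_eq_mul] at this
  intro htop
  rw [htop] at this
  exact (EReal.coe_lt_top _).not_ge this

lemma fconj_ne_bot {f : H → EReal} (hp : ProperFn f) (u : H) : fconj f u ≠ ⊥ := by
  obtain ⟨x0, hx0⟩ := hp.2
  have h := fenchel_young f x0 u
  intro hbot
  rw [hbot, le_bot_iff] at h
  rw [← EReal.coe_toReal hx0 (hp.1 x0), ← EReal.coe_sub] at h
  exact EReal.coe_ne_bot _ h

lemma fconj_dom_convex {f : H → EReal} (hp : ProperFn f) :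
    Convex ℝ (fdom (fconj f)) := by
  intro u hu w hw a b ha hb hab
  set Mu : ℝ := (fconj f u).toReal with hMu
  set Mw : ℝ := (fconj f w).toReal with hMw
  have hue : fconj f u = (Mu : EReal) := (EReal.coe_toReal hu (fconj_ne_bot hp u)).symm
  have hwe : fconj f w = (Mw : EReal) := (EReal.coe_toReal hw (fconj_ne_bot hp w)).symm
  have hle : fconj f (a • u + b • w) ≤ ((a * Mu + b * Mw : ℝ) : EReal) := by
    apply iSup_le
    intro x
    by_cases hx : f x = ⊤
    · rw [hx, EReal.sub_top]; exact bot_le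
    · have hfx : f x = ((f x).toReal : EReal) := (EReal.coe_toReal hx (hp.1 x)).symm
      set ρ : ℝ := (f x).toReal
      have h1 := fenchel_young f x u
      have h2 := fenchel_young f x w
      rw [hfx, ← EReal.coe_sub, hue, EReal.coe_le_coe_iff] at h1
      rw [hfx, ← EReal.coe_sub, hwe, EReal.coe_le_coe_iff] at h2
      have h3 : ⟪x, a • u + b • w⟫_ℝ = a * ⟪x, u⟫_ℝ + b * ⟪x, w⟫_ℝ := by
        rw [inner_add_right, real_inner_smul_right, real_inner_smul_right]
      rw [hfx, h3, ← EReal.coe_sub, EReal.coe_le_coe_iff]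
      have h4 := mul_le_mul_of_nonneg_left h1 ha
      have h5 := mul_le_mul_of_nonneg_left h2 hb
      rw [mul_sub] at h4 h5
      have h6 : a * ρ + b * ρ = ρ := by rw [← add_mul, hab, one_mul]
      linarith
  intro htop
  rw [htop, top_le_iff] at hle
  exact EReal.coe_ne_top _ hle

lemma epi_closed {f : H → EReal} (hl : LowerSemicontinuous f) :
    IsClosed {p : H × ℝ | f p.1 ≤ (p.2 : EReal)} := by
  rw [← isOpen_compl_iff, isOpen_iff_mem_nhds]
  intro p hp
  simp only [Set.mem_compl_iff, Set.mem_setOf_eq, not_le] at hp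
  obtain ⟨z, hz1, hz2⟩ := exists_between hp
  have hzt : z ≠ ⊤ := (hz2.trans_le le_top).ne
  have hzb : z ≠ ⊥ := ((EReal.bot_lt_coe _).trans hz1).ne'
  set r : ℝ := z.toReal with hr
  have hzr : (r : EReal) = z := EReal.coe_toReal hzt hzb
  have hev : ∀ᶠ x' in 𝓝 p.1, z < f x' := hl p.1 z hz2
  obtain ⟨U, hU, hUz⟩ := hev.exists_mem
  have hnb : U ×ˢ Set.Iio r ∈ 𝓝 p := by
    refine prod_mem_nhds hU (Iio_mem_nhds ?_)
    have : (p.2 : EReal) < (r : EReal) := by rw [hzr]; exact hz1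
    exact_mod_cast this
  refine Filter.mem_of_superset hnb ?_
  rintro ⟨x', s'⟩ ⟨hx', hs'⟩
  simp only [Set.mem_compl_iff, Set.mem_setOf_eq, not_le]
  have h1 : (s' : EReal) < (r : EReal) := by exact_mod_cast hs'
  exact h1.trans (hzr ▸ hUz x' hx')

lemma fconj_proper [FiniteDimensional ℝ H] {f : H → EReal} (hp : ProperFn f)
    (hl : LowerSemicontinuous f) (hc : ConvexFn f) : ∃ u, fconj f u ≠ ⊤ := by
  obtain ⟨x0, hx0⟩ := hp.2
  set r0 : ℝ := (f x0).toReal with hr0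
  have hfx0 : f x0 = (r0 : EReal) := (EReal.coe_toReal hx0 (hp.1 x0)).symm
  have hnot : ((x0, r0 - 1) : H × ℝ) ∉ {p : H × ℝ | f p.1 ≤ (p.2 : EReal)} := by
    simp only [Set.mem_setOf_eq, hfx0, EReal.coe_le_coe_iff, not_le]
    linarith
  obtain ⟨φ, s, hφs, hs⟩ := geometric_hahn_banach_closed_point hc (epi_closed hl) hnot
  have hdec : ∀ (x : H) (r : ℝ), φ (x, r) = φ (x, 0) + r * φ (0, 1) := by
    intro x r
    have he : ((x, r) : H × ℝ) = (x, 0) + r • ((0 : H), (1 : ℝ)) := by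
      simp [Prod.ext_iff]
    rw [he, map_add, map_smul, smul_eq_mul]
  set c : ℝ := φ (0, 1) with hcdef
  have hc0 : 0 ≤ -c := by
    refine aux_lin (a := -(φ (x0, 0)) - r0 * c) (c := -s) ?_
    intro t ht
    have h2 := hφs (x0, r0 + t) (by
      simp only [Set.mem_setOf_eq, hfx0, EReal.coe_le_coe_iff]
      linarith)
    rw [hdec] at h2
    nlinarith
  have hcne : c ≠ 0 := by
    intro h0
    have h1 := hφs (x0, r0) (by simp [hfx0])
    have h2 : s < φ (x0, r0 - 1) := hs
    rw [hdec, h0, mul_zero, add_zero] at h1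
    rw [hdec, h0, mul_zero, add_zero] at h2
    linarith
  have hcneg : 0 < -c := lt_of_le_of_ne hc0 (by simpa using (neg_ne_zero.mpr hcne).symm)
  set ψ : H →L[ℝ] ℝ := φ.comp (ContinuousLinearMap.inl ℝ H ℝ) with hψ
  set u0 : H := (InnerProductSpace.toDual ℝ H).symm ψ with hu0def
  have hu0 : ∀ x : H, ⟪u0, x⟫_ℝ = φ (x, 0) := by
    intro x
    rw [hu0def]
    exact InnerProductSpace.toDual_symm_apply
  refine ⟨(-c)⁻¹ • u0, ?_⟩
  have hb : fconj f ((-c)⁻¹ • u0) ≤ ((s / (-c) : ℝ) : EReal) := by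
    apply iSup_le
    intro x
    by_cases hx : f x = ⊤
    · rw [hx, EReal.sub_top]; exact bot_le
    · have hfx : f x = ((f x).toReal : EReal) := (EReal.coe_toReal hx (hp.1 x)).symm
      set ρ : ℝ := (f x).toReal
      have h1 := hφs (x, ρ) (le_of_eq hfx)
      rw [hdec] at h1
      have h2 : ⟪x, (-c)⁻¹ • u0⟫_ℝ = (-c)⁻¹ * φ (x, 0) := by
        rw [real_inner_smul_right, real_inner_comm, hu0]
      rw [hfx, h2, ← EReal.coe_sub, EReal.coe_le_coe_iff]
      rw [le_div_iff₀ hcneg]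
      have h3 : ((-c)⁻¹ * φ (x, 0) - ρ) * (-c) = φ (x, 0) + ρ * c := by
        field_simp
        ring
      rw [h3]
      linarith
  intro htop
  rw [htop] at hb
  exact EReal.coe_ne_top _ (top_le_iff.mp hb)

lemma shift {f : H → EReal} (hp : ProperFn f) {u : H} {M : ℝ}
    (hM : ∀ x, f x ≠ ⊤ → ⟪x, u⟫_ℝ ≤ M) (u0 : H) {t : ℝ} (ht : 0 ≤ t) :
    fconj f (u0 + t • u) ≤ fconj f u0 + ((t * M : ℝ) : EReal) := by
  apply iSup_le
  intro x
  by_cases hx : f x = ⊤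
  · rw [hx, EReal.sub_top]; exact bot_le
  · have hfx : f x = ((f x).toReal : EReal) := (EReal.coe_toReal hx (hp.1 x)).symm
    set ρ : ℝ := (f x).toReal with hρ
    have h1 : ⟪x, u0 + t • u⟫_ℝ = ⟪x, u0⟫_ℝ + t * ⟪x, u⟫_ℝ := by
      rw [inner_add_right, real_inner_smul_right]
    have h2 : (⟪x, u0⟫_ℝ + t * ⟪x, u⟫_ℝ - ρ : ℝ) ≤ (⟪x, u0⟫_ℝ - ρ) + t * M := by
      have := mul_le_mul_of_nonneg_left (hM x hx) ht
      linarith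
    calc ((⟪x, u0 + t • u⟫_ℝ : ℝ) : EReal) - f x
        = (((⟪x, u0⟫_ℝ + t * ⟪x, u⟫_ℝ - ρ : ℝ)) : EReal) := by
          rw [hfx, h1, ← EReal.coe_sub]
      _ ≤ (((⟪x, u0⟫_ℝ - ρ : ℝ)) : EReal) + ((t * M : ℝ) : EReal) := by
          rw [← EReal.coe_add]
          exact_mod_cast h2
      _ ≤ fconj f u0 + ((t * M : ℝ) : EReal) := by
          refine add_le_add ?_ le_rfl
          have := fenchel_young f x u0
          rwa [hfx, ← EReal.coe_sub] at this

lemma riesz_inner [FiniteDimensional ℝ H] (φ : H →L[ℝ] ℝ) (x : H) :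
    ⟪x, (InnerProductSpace.toDual ℝ H).symm φ⟫_ℝ = φ x := by
  rw [real_inner_comm]
  exact InnerProductSpace.toDual_symm_apply

lemma rec_mem [FiniteDimensional ℝ H] {C : Set H} (hC : Convex ℝ C) (hcl : IsClosed C)
    {z : H} (h : ∀ (u : H) (M : ℝ), (∀ c ∈ C, ⟪c, u⟫_ℝ ≤ M) → ⟪z, u⟫_ℝ ≤ 0) :
    z ∈ recCone C := by
  intro y hy
  by_contra hzy
  obtain ⟨φ, s, hφs, hs⟩ := geometric_hahn_banach_closed_point hC hcl hzy
  set u : H := (InnerProductSpace.toDual ℝ H).symm φ with hu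
  have h1 : ∀ c ∈ C, ⟪c, u⟫_ℝ ≤ s := fun c hc => by
    rw [hu, riesz_inner]; exact (hφs c hc).le
  have h2 := h u s h1
  rw [hu, riesz_inner] at h2
  have h3 : φ (z + y) = φ z + φ y := map_add φ z y
  have h4 : φ y < s := hφs y hy
  linarith [hs.trans_eq h3]

lemma smul_rec {C : Set H} (hC : Convex ℝ C) {z : H} (hz : z ∈ recCone C)
    {y : H} (hy : y ∈ C) {t : ℝ} (ht : 0 ≤ t) : y + t • z ∈ C := by
  have hn : ∀ n : ℕ, y + (n : ℝ) • z ∈ C := by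
    intro n
    induction n with
    | zero => simpa using hy
    | succ k ih =>
      have h1 := hz _ ih
      have h2 : y + ((k + 1 : ℕ) : ℝ) • z = z + (y + (k : ℝ) • z) := by
        push_cast
        rw [add_smul, one_smul]
        abel
      rw [h2]; exact h1
  obtain ⟨n, hnt⟩ := exists_nat_ge t
  rcases eq_or_lt_of_le ht with h0 | h0
  · simpa [← h0] using hy
  · have hn0 : (0 : ℝ) < n := lt_of_lt_of_le h0 hnt
    have hkey : y + t • z = (1 - t / n) • y + (t / n) • (y + (n : ℝ) • z) := by
      rw [smul_add, smul_smul, sub_smul, one_smul]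
      rw [div_mul_cancel₀ _ (ne_of_gt hn0)]
      abel
    rw [hkey]
    refine hC hy (hn n) ?_ ?_ (by ring)
    · have : t / n ≤ 1 := by rw [div_le_one hn0]; exact hnt
      linarith
    · positivity

lemma minnorm_inner {S : Set H} (hS : Convex ℝ S) {v : H} (hv : IsMinNormPoint S v) :
    ∀ w ∈ S, ‖v‖ ^ 2 ≤ ⟪v, w⟫_ℝ := by
  intro w hw
  have key : ∀ t : ℝ, 0 < t → t ≤ 1 → 0 ≤ 2 * ⟪v, w - v⟫_ℝ + t * ‖w - v‖ ^ 2 := by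
    intro t ht0 ht1
    have hmem : v + t • (w - v) ∈ S := by
      have he : v + t • (w - v) = (1 - t) • v + t • w := by
        rw [smul_sub, sub_smul, one_smul]; abel
      rw [he]; exact hS hv.1 hw (by linarith) ht0.le (by ring)
    have h1 := hv.2 _ hmem
    have h2 : ‖v‖ ^ 2 ≤ ‖v + t • (w - v)‖ ^ 2 := by
      have := mul_self_le_mul_self (norm_nonneg v) h1
      nlinarith
    rw [norm_add_sq_real, real_inner_smul_right, norm_smul, mul_pow] at h2
    simp only [Real.norm_eq_abs, sq_abs] at h2
    nlinarith
  by_contra hlt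
  push_neg at hlt
  have hneg : ⟪v, w - v⟫_ℝ < 0 := by
    rw [inner_sub_right, real_inner_self_eq_norm_sq]
    linarith
  set a : ℝ := 2 * ⟪v, w - v⟫_ℝ with ha
  set b : ℝ := ‖w - v‖ ^ 2 with hb
  have hbn : 0 ≤ b := sq_nonneg _
  have han : a < 0 := by rw [ha]; linarith
  have ht0 : 0 < min 1 (-a / (2 * (b + 1))) := by
    refine lt_min one_pos (div_pos (by linarith) (by positivity))
  have h3 := key _ ht0 (min_le_left _ _)
  have h5 : min 1 (-a / (2 * (b + 1))) * b ≤ -a / 2 := by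
    calc min 1 (-a / (2 * (b + 1))) * b ≤ (-a / (2 * (b + 1))) * b :=
          mul_le_mul_of_nonneg_right (min_le_right _ _) hbn
      _ ≤ -a / 2 := by
          rw [div_mul_eq_mul_div, div_le_div_iff₀ (by positivity) (by positivity)]
          nlinarith
  linarith

lemma dom_sub_biconj {f : H → EReal} (hp : ProperFn f) :
    fdom f ⊆ fdom (fconj (fconj f)) := by
  intro x hx
  have hle : fconj (fconj f) x ≤ f x := by
    apply iSup_le
    intro u
    by_cases hu : fconj f u = ⊤
    · rw [hu, EReal.sub_top]; exact bot_le
    · have hub : fconj f u ≠ ⊥ := fconj_ne_bot hp u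
      have hσ : fconj f u = (((fconj f u).toReal : ℝ) : EReal) := (EReal.coe_toReal hu hub).symm
      have hfx : f x = ((f x).toReal : EReal) := (EReal.coe_toReal hx (hp.1 x)).symm
      have hy := fenchel_young f x u
      rw [hfx, ← EReal.coe_sub, hσ, EReal.coe_le_coe_iff] at hy
      rw [hσ, hfx, ← EReal.coe_sub, EReal.coe_le_coe_iff, real_inner_comm]
      linarith
  intro htop
  rw [htop, top_le_iff] at hle
  exact hx hle

lemma dom_biconj [FiniteDimensional ℝ H] {f : H → EReal} (hp : ProperFn f)
    (hl : LowerSemicontinuous f) (hc : ConvexFn f) :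
    fdom (fconj (fconj f)) ⊆ closure (fdom f) := by
  intro x hx
  by_contra hxc
  obtain ⟨φ, s, hφs, hs⟩ := geometric_hahn_banach_closed_point
    ((fdom_convex hp hc).closure) isClosed_closure hxc
  set u : H := (InnerProductSpace.toDual ℝ H).symm φ with hu
  have hM : ∀ y, f y ≠ ⊤ → ⟪y, u⟫_ℝ ≤ s := fun y hy => by
    rw [hu, riesz_inner]; exact (hφs y (subset_closure hy)).le
  obtain ⟨u0, hu0⟩ := fconj_proper hp hl hc
  have hpp : ProperFn (fconj f) := ⟨fconj_ne_bot hp, u0, hu0⟩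
  have hxb : fconj (fconj f) x ≠ ⊥ := fconj_ne_bot hpp x
  set β : ℝ := (fconj (fconj f) x).toReal with hβ
  have hβe : fconj (fconj f) x = (β : EReal) := (EReal.coe_toReal hx hxb).symm
  set a : ℝ := (fconj f u0).toReal with ha
  have hae : fconj f u0 = (a : EReal) := (EReal.coe_toReal hu0 (fconj_ne_bot hp u0)).symm
  have key : ∀ t : ℝ, 0 ≤ t → ⟪x, u0⟫_ℝ - a + t * (⟪x, u⟫_ℝ - s) ≤ β := by
    intro t ht
    have h1 := shift hp hM u0 ht
    rw [hae, ← EReal.coe_add] at h1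
    have hg : fconj f (u0 + t • u) ≠ ⊥ := fconj_ne_bot hp _
    have hgt : fconj f (u0 + t • u) ≠ ⊤ := by
      intro h; rw [h, top_le_iff] at h1; exact EReal.coe_ne_top _ h1
    set γ : ℝ := (fconj f (u0 + t • u)).toReal with hγ
    have hγe : fconj f (u0 + t • u) = (γ : EReal) := (EReal.coe_toReal hgt hg).symm
    rw [hγe, EReal.coe_le_coe_iff] at h1
    have h2 := fenchel_young (fconj f) (u0 + t • u) x
    rw [hγe, ← EReal.coe_sub, hβe, EReal.coe_le_coe_iff] at h2
    have h3 : ⟪u0 + t • u, x⟫_ℝ = ⟪x, u0⟫_ℝ + t * ⟪x, u⟫_ℝ := by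
      rw [real_inner_comm, inner_add_right, real_inner_smul_right]
    rw [h3] at h2
    linarith
  have h4 : 0 ≤ s - ⟪x, u⟫_ℝ := by
    refine aux_lin (a := -(⟪x, u0⟫_ℝ - a)) (c := -β) ?_
    intro t ht
    have := key t ht
    linarith
  have h5 : s < ⟪x, u⟫_ℝ := by rw [hu, riesz_inner]; exact hs
  linarith

lemma mem_closure_sub {A B : Set H} {c b : H} (hc : c ∈ closure A) (hb : b ∈ B) :
    c - b ∈ closure (A - B) := by
  have h := image_closure_subset_closure_image (f := fun x => x - b) (s := A)
    (by continuity)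
  have h1 : c - b ∈ closure ((fun x => x - b) '' A) := h ⟨c, hc, rfl⟩
  refine closure_mono ?_ h1
  rintro _ ⟨y, hy, rfl⟩
  exact Set.sub_mem_sub hy hb

lemma mem_closure_sub' {A B : Set H} {a c : H} (ha : a ∈ A) (hc : c ∈ closure B) :
    a - c ∈ closure (A - B) := by
  have h := image_closure_subset_closure_image (f := fun x => a - x) (s := B)
    (by continuity)
  have h1 : a - c ∈ closure ((fun x => a - x) '' B) := h ⟨c, hc, rfl⟩
  refine closure_mono ?_ h1
  rintro _ ⟨y, hy, rfl⟩
  exact Set.sub_mem_sub ha hy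

theorem neg_vD_eq_proj_recCone {H : Type*} [NormedAddCommGroup H] [InnerProductSpace ℝ H]
    [FiniteDimensional ℝ H]
    (f g : H → EReal)
    (hf_prop : ProperFn f) (hf_lsc : LowerSemicontinuous f) (hf_cvx : ConvexFn f)
    (hg_prop : ProperFn g) (hg_lsc : LowerSemicontinuous g) (hg_cvx : ConvexFn g)
    (vP : H) (hvP : IsMinNormPoint (closure (fdom f - fdom g)) vP)
    (vD : H) (hvD : IsMinNormPoint (closure (fdom (fconj f) + fdom (fconj g))) vD)
    : IsProjOn (recCone (closure (fdom f))) (-(vP + vD)) (-vD) := by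
  obtain ⟨x0, hx0⟩ := hf_prop.2
  obtain ⟨y0, hy0⟩ := hg_prop.2
  obtain ⟨u0, hu0⟩ := fconj_proper hf_prop hf_lsc hf_cvx
  obtain ⟨w0, hw0⟩ := fconj_proper hg_prop hg_lsc hg_cvx
  have hSPc : Convex ℝ (closure (fdom f - fdom g)) :=
    ((fdom_convex hf_prop hf_cvx).sub (fdom_convex hg_prop hg_cvx)).closure
  have hSDc : Convex ℝ (closure (fdom (fconj f) + fdom (fconj g))) :=
    ((fconj_dom_convex hf_prop).add (fconj_dom_convex hg_prop)).closure
  have hvPi := minnorm_inner hSPc hvP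
  have hvDi := minnorm_inner hSDc hvD
  have hCc : Convex ℝ (closure (fdom f)) := (fdom_convex hf_prop hf_cvx).closure
  -- Step A : -vD belongs to the recession cone of cl(dom f)
  have hA : -vD ∈ recCone (closure (fdom f)) := by
    apply rec_mem hCc isClosed_closure
    intro u M hbound
    have hM : ∀ y, f y ≠ ⊤ → ⟪y, u⟫_ℝ ≤ M := fun y hy => hbound y (subset_closure hy)
    have h0 : 0 ≤ ⟪vD, u⟫_ℝ := by
      refine aux_lin (a := ⟪vD, u0 + w0⟫_ℝ - ‖vD‖ ^ 2) (c := 0) ?_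
      intro t ht
      have h1 := shift hf_prop hM u0 ht
      have hae : fconj f u0 = (((fconj f u0).toReal : ℝ) : EReal) :=
        (EReal.coe_toReal hu0 (fconj_ne_bot hf_prop u0)).symm
      rw [hae, ← EReal.coe_add] at h1
      have hmem1 : fconj f (u0 + t • u) ≠ ⊤ := by
        intro h; rw [h, top_le_iff] at h1; exact EReal.coe_ne_top _ h1
      have hmem : (u0 + t • u) + w0 ∈ closure (fdom (fconj f) + fdom (fconj g)) :=
        subset_closure (Set.add_mem_add hmem1 hw0)
      have h2 := hvDi _ hmem
      have h3 : ⟪vD, (u0 + t • u) + w0⟫_ℝ = ⟪vD, u0 + w0⟫_ℝ + t * ⟪vD, u⟫_ℝ := by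
        rw [inner_add_right, inner_add_right, real_inner_smul_right,
          inner_add_right (𝕜 := ℝ) vD u0 w0]
        ring
      rw [h3] at h2
      linarith
    rw [inner_neg_left]
    linarith
  -- Step b' : vP has nonnegative inner product with every recession direction
  have hb' : ∀ z ∈ recCone (closure (fdom f)), 0 ≤ ⟪vP, z⟫_ℝ := by
    intro z hz
    refine aux_lin (a := ⟪vP, x0 - y0⟫_ℝ - ‖vP‖ ^ 2) (c := 0) ?_
    intro t ht
    have hx0' : x0 + t • z ∈ closure (fdom f) := smul_rec hCc hz (subset_closure hx0) ht
    have hmem : (x0 + t • z) - y0 ∈ closure (fdom f - fdom g) := mem_closure_sub hx0' hy0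
    have h2 := hvPi _ hmem
    have h3 : ⟪vP, (x0 + t • z) - y0⟫_ℝ = ⟪vP, x0 - y0⟫_ℝ + t * ⟪vP, z⟫_ℝ := by
      rw [inner_sub_right, inner_add_right, inner_sub_right, real_inner_smul_right]
      ring
    rw [h3] at h2
    linarith
  -- Step B : vP is a recession direction of cl(dom f* + dom g*)
  have hB : vP ∈ recCone (closure (fdom (fconj f) + fdom (fconj g))) := by
    apply rec_mem hSDc isClosed_closure
    intro u M hbound
    have hMg : ∀ w, fconj g w ≠ ⊤ → ⟪w, u⟫_ℝ ≤ M - ⟪u0, u⟫_ℝ := by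
      intro w hw
      have := hbound (u0 + w) (subset_closure (Set.add_mem_add hu0 hw))
      rw [inner_add_left] at this
      linarith
    have hppg : ProperFn (fconj g) := ⟨fconj_ne_bot hg_prop, w0, hw0⟩
    have hy0'' : fconj (fconj g) y0 ≠ ⊤ := dom_sub_biconj hg_prop hy0
    have h0 : ⟪vP, u⟫_ℝ ≤ 0 := by
      have h6 : 0 ≤ -⟪vP, u⟫_ℝ := by
        refine aux_lin (a := ⟪vP, x0 - y0⟫_ℝ - ‖vP‖ ^ 2) (c := 0) ?_
        intro t ht
        have h1 := shift hppg hMg y0 ht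
        have hae : fconj (fconj g) y0 = (((fconj (fconj g) y0).toReal : ℝ) : EReal) :=
          (EReal.coe_toReal hy0'' (fconj_ne_bot hppg y0)).symm
        rw [hae, ← EReal.coe_add] at h1
        have hmem1 : fconj (fconj g) (y0 + t • u) ≠ ⊤ := by
          intro h; rw [h, top_le_iff] at h1; exact EReal.coe_ne_top _ h1
        have hmem2 : y0 + t • u ∈ closure (fdom g) :=
          dom_biconj hg_prop hg_lsc hg_cvx hmem1
        have hmem : x0 - (y0 + t • u) ∈ closure (fdom f - fdom g) :=
          mem_closure_sub' hx0 hmem2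
        have h2 := hvPi _ hmem
        have h3 : ⟪vP, x0 - (y0 + t • u)⟫_ℝ = ⟪vP, x0 - y0⟫_ℝ + t * (-⟪vP, u⟫_ℝ) := by
          rw [inner_sub_right, inner_add_right, inner_sub_right, real_inner_smul_right]
          ring
        rw [h3] at h2
        linarith
      linarith
    exact h0
  -- Step C : ⟪vP, vD⟫ = 0
  have hpd : ⟪vP, vD⟫_ℝ = 0 := by
    have hge : 0 ≤ ⟪vD, vP⟫_ℝ := by
      have hmem : vP + vD ∈ closure (fdom (fconj f) + fdom (fconj g)) := hB vD hvD.1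
      have h2 := hvDi _ hmem
      rw [inner_add_right, real_inner_self_eq_norm_sq] at h2
      linarith
    have hle : ⟪vP, vD⟫_ℝ ≤ 0 := by
      have := hb' _ hA
      rw [inner_neg_right] at this
      linarith
    rw [real_inner_comm] at hge
    linarith
  -- Conclusion
  refine ⟨hA, ?_⟩
  intro w hw
  have hip : ⟪vP, w⟫_ℝ + ⟪vP, vD⟫_ℝ ≥ 0 := by
    have := hb' w hw
    linarith [hpd]
  have hsq : dist (-(vP + vD)) (-vD) ^ 2 ≤ dist (-(vP + vD)) w ^ 2 := by
    rw [dist_eq_norm, dist_eq_norm]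
    have he1 : -(vP + vD) - -vD = -vP := by abel
    have he2 : -(vP + vD) - w = -vP - (w + vD) := by abel
    rw [he1, he2, norm_sub_sq_real]
    have h5 : ⟪-vP, w + vD⟫_ℝ = -(⟪vP, w⟫_ℝ + ⟪vP, vD⟫_ℝ) := by
      rw [inner_neg_left, inner_add_right]
    rw [h5]
    nlinarith [sq_nonneg ‖w + vD‖]
  have h6 := Real.sqrt_le_sqrt hsq
  rwa [Real.sqrt_sq dist_nonneg, Real.sqrt_sq dist_nonneg] at h6
end
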